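/- Let G : ℝ → ℝ be C² with G' ≥ 0 on ℝ, let Φ(y,t) = (y, t + (y²/2)G(t)) (a C¹ diffeomorphism of ℝ²), and let Ψ = (Ψ₁, Ψ₂) : ℝ² → ℝ² be its inverse. Define φ : ℝ² → ℝ by φ(u,v) = u·G(Ψ₂(u,v)). Then at every point (u,v) ∈ ℝ²: (i) ∂φ/∂u + φ·∂φ/∂v = G(Ψ₂(u,v)), and (ii) the twice-iterated Burgers operator vanishes: ∂/∂u(∂φ/∂u + φ·∂φ/∂v) + φ·∂/∂v(∂φ/∂u + φ·∂φ/∂v) = 0. -/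

import Mathlib

/-- The map `Φ(y,t) = (y, t + (y²/2)G(t))`. -/
noncomputable def PhiMap (G : ℝ → ℝ) (p : ℝ × ℝ) : ℝ × ℝ :=
  (p.1, p.2 + p.1 ^ 2 / 2 * G p.2)

/-- The intrinsic graphing function `φ(u,v) = u·G(Ψ₂(u,v))`. -/
noncomputable def phiMap (G : ℝ → ℝ) (Ψ : ℝ × ℝ → ℝ × ℝ) (u v : ℝ) : ℝ :=
  u * G ((Ψ (u, v)).2)

/-- The Burgers operator applied to `φ`: `B_φ(φ) = φ_u + φ·φ_v`. -/
noncomputable def burgers (G : ℝ → ℝ) (Ψ : ℝ × ℝ → ℝ × ℝ) (u v : ℝ) : ℝ :=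
  deriv (fun u' => phiMap G Ψ u' v) u
    + phiMap G Ψ u v * deriv (fun v' => phiMap G Ψ u v') v

open ContinuousLinearMap in
lemma psi_facts (G : ℝ → ℝ) (hG : ContDiff ℝ 2 G) (hG' : ∀ t : ℝ, 0 ≤ deriv G t)
    (Ψ : ℝ × ℝ → ℝ × ℝ)
    (hΨl : Function.LeftInverse Ψ (PhiMap G))
    (hΨr : Function.RightInverse Ψ (PhiMap G)) (u v : ℝ) :
    0 < 1 + u ^ 2 / 2 * deriv G ((Ψ (u, v)).2) ∧
    HasDerivAt (fun u' => (Ψ (u', v)).2)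
      (-(u * G ((Ψ (u, v)).2) / (1 + u ^ 2 / 2 * deriv G ((Ψ (u, v)).2)))) u ∧
    HasDerivAt (fun v' => (Ψ (u, v')).2)
      (1 / (1 + u ^ 2 / 2 * deriv G ((Ψ (u, v)).2))) v := by
  set p : ℝ × ℝ := Ψ (u, v) with hp
  have hΦp : PhiMap G p = (u, v) := hΨr (u, v)
  have hp1 : p.1 = u := congrArg Prod.fst hΦp
  set t : ℝ := p.2 with ht
  set a : ℝ := u * G t with ha
  set d : ℝ := 1 + u ^ 2 / 2 * deriv G t with hd
  have hdpos : 0 < d := by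
    have h1 : 0 ≤ u ^ 2 / 2 * deriv G t := mul_nonneg (by positivity) (hG' t)
    rw [hd]
    linarith
  have hdne : d ≠ 0 := ne_of_gt hdpos
  -- the derivative of `PhiMap G` at `p` and its inverse
  set A : ℝ × ℝ →L[ℝ] ℝ × ℝ :=
    (fst ℝ ℝ ℝ).prod (a • fst ℝ ℝ ℝ + d • snd ℝ ℝ ℝ) with hA
  set B : ℝ × ℝ →L[ℝ] ℝ × ℝ :=
    (fst ℝ ℝ ℝ).prod ((-(a / d)) • fst ℝ ℝ ℝ + (1 / d) • snd ℝ ℝ ℝ) with hB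
  have hBA : Function.LeftInverse B A := by
    intro x
    refine Prod.ext (by simp [hA, hB]) ?_
    simp only [hA, hB, ContinuousLinearMap.prod_apply, ContinuousLinearMap.add_apply,
      ContinuousLinearMap.smul_apply, coe_fst', coe_snd', smul_eq_mul]
    field_simp
    ring
  have hAB : Function.RightInverse B A := by
    intro x
    refine Prod.ext (by simp [hA, hB]) ?_
    simp only [hA, hB, ContinuousLinearMap.prod_apply, ContinuousLinearMap.add_apply,
      ContinuousLinearMap.smul_apply, coe_fst', coe_snd', smul_eq_mul]
    field_simp
    ring
  set e : (ℝ × ℝ) ≃L[ℝ] (ℝ × ℝ) := ContinuousLinearEquiv.equivOfInverse A B hBA hAB with he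
  -- `PhiMap G` is strictly differentiable at `p` with derivative `A`
  have hGd : ∀ s : ℝ, HasStrictDerivAt G (deriv G s) s := fun s =>
    hG.contDiffAt.hasStrictDerivAt (by norm_num)
  have hq : HasStrictFDerivAt (fun q : ℝ × ℝ => q.1 ^ 2 / 2) (u • fst ℝ ℝ ℝ) p := by
    have hfun : (fun q : ℝ × ℝ => q.1 ^ 2 / 2) = fun q : ℝ × ℝ => (1 / 2 : ℝ) * (q.1 * q.1) := by
      funext q; ring
    rw [hfun]
    have h := ((hasStrictFDerivAt_fst (𝕜 := ℝ) (E := ℝ) (F := ℝ) (p := p)).mul (hasStrictFDerivAt_fst (𝕜 := ℝ) (E := ℝ) (F := ℝ) (p := p))).const_mul (1 / 2 : ℝ)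
    refine h.congr_fderiv ?_
    refine ContinuousLinearMap.ext fun x => ?_
    simp [hp1, smul_eq_mul]
    ring
  have hGc : HasStrictFDerivAt (fun q : ℝ × ℝ => G q.2) (deriv G t • snd ℝ ℝ ℝ) p :=
    (hGd t).comp_hasStrictFDerivAt p hasStrictFDerivAt_snd
  have hAfd : HasStrictFDerivAt (PhiMap G) A p := by
    have h := hasStrictFDerivAt_fst.prodMk (hasStrictFDerivAt_snd.add (hq.mul hGc))
    refine h.congr_fderiv ?_
    refine ContinuousLinearMap.ext fun x => Prod.ext rfl ?_
    simp only [hA, ContinuousLinearMap.prod_apply, ContinuousLinearMap.add_apply,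
      ContinuousLinearMap.smul_apply, coe_fst', coe_snd', smul_eq_mul, ha, hd, hp1]
    ring
  have hAfd' : HasStrictFDerivAt (PhiMap G) (e : (ℝ × ℝ) →L[ℝ] ℝ × ℝ) p := hAfd
  -- hence `Ψ` is differentiable at `(u, v)` with derivative `B`
  have hΨd : HasStrictFDerivAt Ψ (e.symm : (ℝ × ℝ) →L[ℝ] ℝ × ℝ) (u, v) := by
    have h := hAfd'.to_local_left_inverse (Filter.Eventually.of_forall hΨl)
    rwa [hΦp] at h
  have hsymm : (e.symm : (ℝ × ℝ) →L[ℝ] ℝ × ℝ) = B := rfl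
  refine ⟨hdpos, ?_, ?_⟩
  · have hcu : HasDerivAt (fun u' : ℝ => ((u' : ℝ), v)) ((1 : ℝ), (0 : ℝ)) u :=
      (hasDerivAt_id u).prodMk (hasDerivAt_const u v)
    have h := (ContinuousLinearMap.snd ℝ ℝ ℝ).hasFDerivAt.comp_hasDerivAt u
      ((hΨd.hasFDerivAt).comp_hasDerivAt u hcu)
    refine h.congr_deriv ?_
    symm
    show -(a / d) = _
    rw [hsymm]
    simp only [hB, Function.comp, ContinuousLinearMap.prod_apply, ContinuousLinearMap.add_apply,
      ContinuousLinearMap.smul_apply, coe_fst', coe_snd', smul_eq_mul]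
    ring
  · have hcv : HasDerivAt (fun v' : ℝ => ((u : ℝ), v')) ((0 : ℝ), (1 : ℝ)) v :=
      (hasDerivAt_const v u).prodMk (hasDerivAt_id v)
    have h := (ContinuousLinearMap.snd ℝ ℝ ℝ).hasFDerivAt.comp_hasDerivAt v
      ((hΨd.hasFDerivAt).comp_hasDerivAt v hcv)
    refine h.congr_deriv ?_
    symm
    show 1 / d = _
    rw [hsymm]
    simp only [hB, Function.comp, ContinuousLinearMap.prod_apply, ContinuousLinearMap.add_apply,
      ContinuousLinearMap.smul_apply, coe_fst', coe_snd', smul_eq_mul]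
    ring

lemma burgers_eq (G : ℝ → ℝ) (hG : ContDiff ℝ 2 G) (hG' : ∀ t : ℝ, 0 ≤ deriv G t)
    (Ψ : ℝ × ℝ → ℝ × ℝ)
    (hΨl : Function.LeftInverse Ψ (PhiMap G))
    (hΨr : Function.RightInverse Ψ (PhiMap G)) (u v : ℝ) :
    burgers G Ψ u v = G ((Ψ (u, v)).2) := by
  obtain ⟨hdpos, hψu, hψv⟩ := psi_facts G hG hG' Ψ hΨl hΨr u v
  set t : ℝ := (Ψ (u, v)).2 with ht
  set d : ℝ := 1 + u ^ 2 / 2 * deriv G t with hd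
  have hdne : d ≠ 0 := ne_of_gt hdpos
  have hGd : ∀ s : ℝ, HasDerivAt G (deriv G s) s := fun s =>
    ((hG.differentiable (by norm_num)) s).hasDerivAt
  have hφu : HasDerivAt (fun u' => phiMap G Ψ u' v)
      (1 * G t + u * (deriv G t * -(u * G t / d))) u := by
    unfold phiMap
    exact (hasDerivAt_id u).mul (((hGd t).comp u hψu))
  have hφv : HasDerivAt (fun v' => phiMap G Ψ u v')
      (u * (deriv G t * (1 / d))) v := by
    unfold phiMap
    exact (((hGd t).comp v hψv)).const_mul u
  rw [burgers, hφu.deriv, hφv.deriv]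
  show 1 * G t + u * (deriv G t * -(u * G t / d)) + u * G t * (u * (deriv G t * (1 / d))) = G t
  field_simp
  ring

/-- With `Ψ` the inverse of `Φ` and `φ(u,v) = u·G(Ψ₂(u,v))`, at every point
`(u,v)`: (i) `φ_u + φ·φ_v = G(Ψ₂(u,v))`, and (ii) `B_φ(B_φ(φ)) = 0`. -/
theorem stmt3 (G : ℝ → ℝ) (hG : ContDiff ℝ 2 G) (hG' : ∀ t : ℝ, 0 ≤ deriv G t)
    (Ψ : ℝ × ℝ → ℝ × ℝ)
    (hΨl : Function.LeftInverse Ψ (PhiMap G))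
    (hΨr : Function.RightInverse Ψ (PhiMap G)) :
    ∀ u v : ℝ,
      burgers G Ψ u v = G ((Ψ (u, v)).2) ∧
      deriv (fun u' => burgers G Ψ u' v) u
          + phiMap G Ψ u v * deriv (fun v' => burgers G Ψ u v') v = 0 := by
  intro u v
  obtain ⟨hdpos, hψu, hψv⟩ := psi_facts G hG hG' Ψ hΨl hΨr u v
  set t : ℝ := (Ψ (u, v)).2 with ht
  set d : ℝ := 1 + u ^ 2 / 2 * deriv G t with hd
  have hdne : d ≠ 0 := ne_of_gt hdpos
  have hGd : ∀ s : ℝ, HasDerivAt G (deriv G s) s := fun s =>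
    ((hG.differentiable (by norm_num)) s).hasDerivAt
  refine ⟨burgers_eq G hG hG' Ψ hΨl hΨr u v, ?_⟩
  have h1 : (fun u' => burgers G Ψ u' v) = fun u' => G ((Ψ (u', v)).2) :=
    funext fun u' => burgers_eq G hG hG' Ψ hΨl hΨr u' v
  have h2 : (fun v' => burgers G Ψ u v') = fun v' => G ((Ψ (u, v')).2) :=
    funext fun v' => burgers_eq G hG hG' Ψ hΨl hΨr u v'
  have hBu : HasDerivAt (fun u' => G ((Ψ (u', v)).2)) (deriv G t * -(u * G t / d)) u :=
    (hGd t).comp u hψu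
  have hBv : HasDerivAt (fun v' => G ((Ψ (u, v')).2)) (deriv G t * (1 / d)) v :=
    (hGd t).comp v hψv
  rw [h1, h2, hBu.deriv, hBv.deriv]
  show deriv G t * -(u * G t / d) + u * G t * (deriv G t * (1 / d)) = 0
  field_simp
  ring
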